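/- For every n > 1, the Černý automaton C_n is synchronizing and the minimum length of a reset word for C_n is exactly (n−1)²: C_n has a reset word of length (n−1)², and every reset word for C_n has length at least (n−1)². -/
import Mathlib


/-- Apply a word (list of letters) to a state of a DFA with transition function `δ`. -/
def applyWord {Q A : Type*} (δ : Q → A → Q) (q : Q) : List A → Q
  | [] => q
  | a :: w => applyWord δ (δ q a) w

/-- The history (list) of letters played after `n` moves of the synchronization game,
when Alice uses strategy `σA` and Bob uses strategy `σB`; Alice moves first, i.e.
the letters at even indices are chosen by Alice and those at odd indices by Bob. -/
def playHist {A : Type*} (σA σB : List A → A) : ℕ → List A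
  | 0 => []
  | n + 1 =>
      let h := playHist σA σB n
      h ++ [if n % 2 = 0 then σA h else σB h]

/-- `w` synchronizes the position `P` (a set of states holding coins) to a single state. -/
def IsResetFrom {Q A : Type*} [DecidableEq Q] (δ : Q → A → Q) (P : Finset Q)
    (w : List A) : Prop :=
  (P.image fun q => applyWord δ q w).card = 1

/-- Alice has a winning strategy in the synchronization game starting from position `P`. -/
def AliceWins {Q A : Type*} [DecidableEq Q] (δ : Q → A → Q) (P : Finset Q) : Prop :=
  ∃ σA : List A → A, ∀ σB : List A → A, ∃ k : ℕ,
    IsResetFrom δ P (playHist σA σB k)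

/-- Alice has a strategy in the synchronization game starting from position `P` that
guarantees reaching a singleton position in a play in which Alice has chosen at most
`m` letters (after `k` letters in total, Alice has chosen `(k + 1) / 2` of them). -/
def AliceWinsWithin {Q A : Type*} [DecidableEq Q] (δ : Q → A → Q) (P : Finset Q)
    (m : ℕ) : Prop :=
  ∃ σA : List A → A, ∀ σB : List A → A, ∃ k : ℕ,
    IsResetFrom δ P (playHist σA σB k) ∧ (k + 1) / 2 ≤ m

/-- Bob has a winning strategy in the synchronization game starting from position `P`:
against every strategy of Alice the position never becomes a singleton. -/
def BobWins {Q A : Type*} [DecidableEq Q] (δ : Q → A → Q) (P : Finset Q) : Prop :=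
  ∃ σB : List A → A, ∀ σA : List A → A, ∀ k : ℕ,
    ¬ IsResetFrom δ P (playHist σA σB k)

/-- The Černý automaton `C_n`: states are residues modulo `n`, the letter `a` (here
`false`) sends `0` to `1` and fixes every other state, and the letter `b` (here `true`)
adds `1` modulo `n`. -/
def cernyStep (n : ℕ) : ZMod n → Bool → ZMod n
  | m, false => if m = 0 then 1 else m
  | m, true => m + 1

-- helpers
lemma applyWord_nil {Q A : Type*} (δ : Q → A → Q) (q : Q) : applyWord δ q [] = q := rfl

lemma applyWord_cons {Q A : Type*} (δ : Q → A → Q) (q : Q) (a : A) (w : List A) :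
    applyWord δ q (a :: w) = applyWord δ (δ q a) w := rfl

lemma applyWord_append {Q A : Type*} (δ : Q → A → Q) (u v : List A) (q : Q) :
    applyWord δ q (u ++ v) = applyWord δ (applyWord δ q u) v := by
  induction u generalizing q with
  | nil => rfl
  | cons a u ih => simp [applyWord_cons, ih]

lemma cerny_true (n : ℕ) (q : ZMod n) : cernyStep n q true = q + 1 := rfl
lemma cerny_false (n : ℕ) (q : ZMod n) : cernyStep n q false = if q = 0 then 1 else q := rfl

lemma zmod_val_sub_one {n : ℕ} [NeZero n] (q : ZMod n) (hq : q ≠ 0) :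
    (q - 1).val = q.val - 1 := by
  have h1 : 1 ≤ q.val := by
    rcases Nat.eq_zero_or_pos q.val with h | h
    · exact absurd ((ZMod.val_eq_zero q).mp h) hq
    · exact h
  have h2 : q.val - 1 < n := lt_of_le_of_lt (Nat.sub_le _ _) (ZMod.val_lt q)
  have h3 : ((q.val - 1 : ℕ) : ZMod n) = q - 1 := by
    rw [Nat.cast_sub h1, ZMod.natCast_zmod_val, Nat.cast_one]
  rw [← h3, ZMod.val_cast_of_lt h2]

lemma zmod_val_le {n : ℕ} [NeZero n] (q : ZMod n) : q.val ≤ (q - 1).val + 1 := by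
  by_cases hq : q = 0
  · simp [hq]
  · rw [zmod_val_sub_one q hq]
    have h1 : 1 ≤ q.val := by
      rcases Nat.eq_zero_or_pos q.val with h | h
      · exact absurd ((ZMod.val_eq_zero q).mp h) hq
      · exact h
    omega

lemma zmod_val_neg_one {n : ℕ} [NeZero n] (hn : 1 < n) : (-1 : ZMod n).val = n - 1 := by
  have h : ((n - 1 : ℕ) : ZMod n) = -1 := by
    rw [Nat.cast_sub (by omega : 1 ≤ n)]
    simp
  rw [← h, ZMod.val_cast_of_lt (by omega)]

lemma applyWord_replicate {n : ℕ} (k : ℕ) (q : ZMod n) :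
    applyWord (cernyStep n) q (List.replicate k true) = q + k := by
  induction k generalizing q with
  | zero => simp [applyWord_nil]
  | succ k ih =>
      rw [List.replicate_succ, applyWord_cons, cerny_true, ih]
      push_cast; ring

/-- word `a (b^{n-1} a)^k` -/
def cword (n : ℕ) : ℕ → List Bool
  | 0 => [false]
  | k + 1 => cword n k ++ (List.replicate (n - 1) true ++ [false])

lemma cword_length (n : ℕ) (hn : 1 < n) (k : ℕ) : (cword n k).length = 1 + k * n := by
  induction k with
  | zero => simp [cword]
  | succ k ih =>
      have h : (k+1)*n = k*n + n := Nat.succ_mul k n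
      simp [cword, ih]
      omega

lemma cword_bound {n : ℕ} [NeZero n] (hn : 1 < n) (k : ℕ) (hk : k ≤ n - 2) (q : ZMod n) :
    1 ≤ (applyWord (cernyStep n) q (cword n k)).val ∧
      (applyWord (cernyStep n) q (cword n k)).val ≤ n - 1 - k := by
  induction k with
  | zero =>
      rw [show cword n 0 = [false] from rfl, applyWord_cons, applyWord_nil, cerny_false]
      by_cases hq : q = 0
      · simp [hq, ZMod.val_one_eq_one_mod, Nat.mod_eq_of_lt hn]
        omega
      · simp [hq]
        constructor
        · rcases Nat.eq_zero_or_pos q.val with h | h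
          · exact absurd ((ZMod.val_eq_zero q).mp h) hq
          · exact h
        · have := ZMod.val_lt q; omega
  | succ k ih =>
      have hk' : k ≤ n - 2 := by omega
      obtain ⟨h1, h2⟩ := ih hk'
      set r := applyWord (cernyStep n) q (cword n k) with hr
      rw [show cword n (k+1) = cword n k ++ (List.replicate (n-1) true ++ [false]) from rfl,
        applyWord_append, applyWord_append, applyWord_replicate, applyWord_cons, applyWord_nil,
        cerny_false]
      have hcast : ((n - 1 : ℕ) : ZMod n) = -1 := by
        rw [Nat.cast_sub (by omega : 1 ≤ n)]; simp
      rw [← hr, hcast]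
      have hrne : r ≠ 0 := by
        intro h; rw [h] at h1; simp [ZMod.val_zero] at h1
      have hsub : (r + -1).val = r.val - 1 := by
        rw [show r + -1 = r - 1 by ring]; exact zmod_val_sub_one r hrne
      by_cases hz : r + -1 = 0
      · simp [hz]
        rw [ZMod.val_one_eq_one_mod, Nat.mod_eq_of_lt hn]
        omega
      · simp [hz, hsub]
        have : r.val - 1 ≠ 0 := by
          intro h
          apply hz
          have : (r - 1).val = 0 := by rw [zmod_val_sub_one r hrne]; exact h
          have := (ZMod.val_eq_zero _).mp this
          rw [show r + -1 = r - 1 by ring]; exact this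
        omega


/-- For every `n > 1`, the Černý automaton `C_n` is synchronizing, it has a reset word of
length `(n-1)²`, and every reset word for `C_n` has length at least `(n-1)²`. -/
theorem cerny_reset_length (n : ℕ) [NeZero n] (hn : 1 < n) :
    (∃ w : List Bool, w.length = (n - 1) ^ 2 ∧ IsResetFrom (cernyStep n) Finset.univ w) ∧
      ∀ w : List Bool, IsResetFrom (cernyStep n) Finset.univ w → (n - 1) ^ 2 ≤ w.length := by
  have hsq : (n - 1) ^ 2 = 1 + (n - 2) * n := by
    obtain ⟨j, rfl⟩ : ∃ j, n = j + 2 := ⟨n - 2, by omega⟩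
    simp [Nat.add_sub_cancel]
    ring
  constructor
  · -- upper bound
    refine ⟨cword n (n - 2), ?_, ?_⟩
    · rw [cword_length n hn]; omega
    · have hone : ∀ q : ZMod n, applyWord (cernyStep n) q (cword n (n - 2)) = 1 := by
        intro q
        obtain ⟨h1, h2⟩ := cword_bound hn (n - 2) le_rfl q
        have hval : (applyWord (cernyStep n) q (cword n (n-2))).val = 1 := by omega
        have : ((1 : ℕ) : ZMod n) = 1 := by simp
        apply ZMod.val_injective
        rw [hval, ZMod.val_one_eq_one_mod, Nat.mod_eq_of_lt hn]
      unfold IsResetFrom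
      have : (Finset.univ.image fun q => applyWord (cernyStep n) q (cword n (n-2)))
          = {(1 : ZMod n)} := by
        rw [Finset.image_congr (g := fun _ => (1 : ZMod n)) (fun x _ => hone x)]
        exact Finset.image_const Finset.univ_nonempty 1
      rw [this, Finset.card_singleton]
  · -- lower bound
    intro w hw
    unfold IsResetFrom at hw
    obtain ⟨f, hf⟩ := Finset.card_eq_one.mp hw
    have hfq : ∀ q : ZMod n, applyWord (cernyStep n) q w = f := by
      intro q
      have : applyWord (cernyStep n) q w ∈
          Finset.univ.image fun q => applyWord (cernyStep n) q w :=
        Finset.mem_image_of_mem _ (Finset.mem_univ q)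
      rw [hf] at this
      exact Finset.mem_singleton.mp this
    -- the invariant
    have inv : ∀ u : List Bool,
        (∀ q : ZMod n, applyWord (cernyStep n) q u ≠ f) ∨
        ((∀ q : ZMod n, applyWord (cernyStep n) q u = f) ∧ (n - 1) ^ 2 ≤ u.length) ∨
        (∃ (c : ZMod n) (m : ℕ), 1 ≤ m ∧ m < n ∧
          (∀ q : ZMod n, applyWord (cernyStep n) q u = f ↔ (q - c).val < m) ∧
          (n - 1) ^ 2 ≤ u.length + ((c - 1).val + 1 + (n - m - 1) * n)) := by
      have vne : ∀ q : ZMod n, q ≠ 0 → 1 ≤ q.val := by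
        intro q hq
        rcases Nat.eq_zero_or_pos q.val with h | h
        · exact absurd ((ZMod.val_eq_zero q).mp h) hq
        · exact h
      intro u
      induction u with
      | nil =>
          right; right
          refine ⟨f, 1, le_rfl, by omega, ?_, ?_⟩
          · intro q
            rw [applyWord_nil]
            constructor
            · intro h; simp [h]
            · intro h
              have h0 : (q - f).val = 0 := by omega
              have := sub_eq_zero.mp ((ZMod.val_eq_zero _).mp h0)
              exact this
          · rw [List.length_nil, hsq]
            have : 1 ≤ (f-1).val + 1 := by omega
            have h12 : n - 1 - 1 = n - 2 := by omega
            rw [h12]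
            omega
      | cons x u ih =>
          rcases ih with hemp | ⟨huniv, hlen⟩ | ⟨c, m, hm1, hmn, hmem, hlen⟩
          · left; intro q; rw [applyWord_cons]; exact hemp _
          · right; left
            refine ⟨fun q => by rw [applyWord_cons]; exact huniv _, ?_⟩
            rw [List.length_cons]; omega
          · -- arc case
            cases x with
            | true =>
                right; right
                refine ⟨c - 1, m, hm1, hmn, ?_, ?_⟩
                · intro q
                  rw [applyWord_cons, cerny_true, hmem (q+1),
                    show q + 1 - c = q - (c-1) by ring]
                · rw [List.length_cons]
                  have := zmod_val_le (c - 1)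
                  omega
            | false =>
                by_cases hc : c = 1
                · -- growth case
                  subst hc
                  have hmemnew : ∀ q : ZMod n,
                      applyWord (cernyStep n) q (false :: u) = f ↔ q.val < m + 1 := by
                    intro q
                    rw [applyWord_cons, cerny_false]
                    by_cases hq : q = 0
                    · subst hq; rw [if_pos rfl]
                      rw [hmem 1]
                      simp [ZMod.val_zero]
                      omega
                    · simp only [if_neg hq]
                      rw [hmem q]
                      have h1 : (q - 1).val = q.val - 1 := zmod_val_sub_one q hq
                      have h2 : 1 ≤ q.val := vne q hq
                      omega
                  by_cases hm : m + 1 < n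
                  · right; right
                    refine ⟨0, m + 1, by omega, hm, ?_, ?_⟩
                    · intro q; rw [hmemnew q]; simp
                    · rw [List.length_cons]
                      have hneg : ((0 : ZMod n) - 1).val = n - 1 := by
                        rw [zero_sub]; exact zmod_val_neg_one hn
                      have hsplit : (n - m - 1) * n = (n - m - 2) * n + n := by
                        have h : n - m - 1 = (n - m - 2) + 1 := by omega
                        rw [h, Nat.succ_mul]
                      have hold : (n-1)^2 ≤ u.length + (((1:ZMod n) - 1).val + 1 + (n-m-1)*n) := hlen
                      rw [sub_self, ZMod.val_zero] at hold
                      have : n - (m+1) - 1 = n - m - 2 := by omega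
                      rw [hneg, this]
                      omega
                  · -- reached univ
                    right; left
                    have hmn' : m = n - 1 := by omega
                    refine ⟨fun q => (hmemnew q).mpr (by have := ZMod.val_lt q; omega), ?_⟩
                    rw [List.length_cons]
                    have hold : (n-1)^2 ≤ u.length + (((1:ZMod n) - 1).val + 1 + (n-m-1)*n) := hlen
                    rw [sub_self, ZMod.val_zero] at hold
                    have : n - m - 1 = 0 := by omega
                    rw [this] at hold
                    simp at hold
                    omega
                · -- c ≠ 1
                  have hc1 : (1 : ZMod n) - c ≠ 0 := by
                    intro h; exact hc (sub_eq_zero.mp h).symm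
                  have hkey : ((0 : ZMod n) - c).val = (1 - c).val - 1 := by
                    have : (0 : ZMod n) - c = (1 - c) - 1 := by ring
                    rw [this, zmod_val_sub_one _ hc1]
                  by_cases h1 : ((1 : ZMod n) - c).val < m
                  · -- 0 and 1 both in arc: no-op
                    right; right
                    refine ⟨c, m, hm1, hmn, ?_, ?_⟩
                    · intro q
                      rw [applyWord_cons, cerny_false]
                      by_cases hq : q = 0
                      · subst hq; rw [if_pos rfl]
                        rw [hmem 1]
                        constructor
                        · intro _; omega
                        · intro _; exact h1
                      · simp only [if_neg hq]; exact hmem q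
                    · rw [List.length_cons]; omega
                  · by_cases h0 : ((0 : ZMod n) - c).val < m
                    · -- 0 in arc (top), 1 not: deletion
                      have htop : ((0 : ZMod n) - c).val = m - 1 := by omega
                      by_cases hm2 : 2 ≤ m
                      · right; right
                        refine ⟨c, m - 1, by omega, by omega, ?_, ?_⟩
                        · intro q
                          rw [applyWord_cons, cerny_false]
                          by_cases hq : q = 0
                          · subst hq; rw [if_pos rfl]
                            rw [hmem 1]
                            constructor
                            · intro h; omega
                            · intro h; omega
                          · simp only [if_neg hq]
                            rw [hmem q]
                            constructor
                            · intro h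
                              rcases Nat.lt_or_ge (q - c).val (m - 1) with h' | h'
                              · exact h'
                              · exfalso
                                have : (q - c).val = m - 1 := by omega
                                have : q - c = 0 - c := by
                                  apply ZMod.val_injective
                                  rw [this, htop]
                                exact hq (sub_left_injective this)
                            · intro h; omega
                        · rw [List.length_cons]
                          have : (n - m - 1) * n ≤ (n - (m-1) - 1) * n :=
                            Nat.mul_le_mul_right n (by omega)
                          omega
                      · -- m = 1 : arc was {0}, becomes empty
                        have hm' : m = 1 := by omega
                        left
                        intro q
                        rw [applyWord_cons, cerny_false]
                        by_cases hq : q = 0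
                        · subst hq; rw [if_pos rfl]
                          intro hEq
                          rw [hmem 1] at hEq
                          omega
                        · simp only [if_neg hq]
                          intro hEq
                          rw [hmem q] at hEq
                          have h := hEq
                          have : (q - c).val = 0 := by omega
                          have h2 : q - c = 0 := (ZMod.val_eq_zero _).mp this
                          have h3 : (0:ZMod n) - c = 0 :=
                            (ZMod.val_eq_zero _).mp (by omega)
                          exact hq (sub_left_injective (h2.trans h3.symm))
                    · -- neither 0 nor... (1 not in arc, 0 not in arc): no-op
                      right; right
                      refine ⟨c, m, hm1, hmn, ?_, ?_⟩
                      · intro q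
                        rw [applyWord_cons, cerny_false]
                        by_cases hq : q = 0
                        · subst hq; rw [if_pos rfl]
                          rw [hmem 1]
                          constructor
                          · intro h; omega
                          · intro h; omega
                        · simp only [if_neg hq]; exact hmem q
                      · rw [List.length_cons]; omega
    -- conclude
    rcases inv w with hemp | ⟨_, hlen⟩ | ⟨c, m, hm1, hmn, hmem, hlen⟩
    · exact absurd (hfq 0) (hemp 0)
    · exact hlen
    · exfalso
      have : applyWord (cernyStep n) (c + (m : ZMod n)) w = f := hfq _
      rw [hmem] at this
      rw [add_sub_cancel_left, ZMod.val_cast_of_lt hmn] at this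
      omega
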